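/- Let r be an integer with r ≥ 1 and r > v(a), and assume a ≠ 0. Let x, y ∈ o be such that x² − bxy + acy² ∈ ϖ·o^× (i.e., det t(x,y) has valuation exactly 1). Then t(x,y) ∉ B(F)·K₂(p^r). -/

import Mathlib

open scoped Pointwise
open Matrix

noncomputable section

abbrev Zm0 : Type := WithZero (Multiplicative ℤ)

/-- `ev n` is the value (in `ℤₘ₀ = WithZero (Multiplicative ℤ)`) of an element of additive
valuation `n`; thus `x ∈ 𝔭^n` iff `v x ≤ ev n`, `x ∈ 𝔬` iff `v x ≤ ev 0`, `x ∈ 𝔬^×` iff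
`v x = ev 0`, and "the additive valuation of x is < n" iff `ev n < v x`. -/
def ev (n : ℤ) : Zm0 := ((Multiplicative.ofAdd (-n) : Multiplicative ℤ) : Zm0)

variable {F : Type*} [Field F]

/-- the matrix t(x,y) = [[x, cy],[−ay, x−by]] -/
def tmat (a b c x y : F) : Matrix (Fin 2) (Fin 2) F :=
  !![x, c * y; -(a * y), x - b * y]

/-- GL₂(𝔬) : integral entries and unit determinant -/
def GL2O (v : Valuation F Zm0) : Set (Matrix (Fin 2) (Fin 2) F) :=
  {g | (∀ i j, v (g i j) ≤ ev 0) ∧ v g.det = ev 0}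

/-- K₂(𝔭ⁿ) = { g ∈ GL₂(𝔬) : g₁₁ ∈ 1 + 𝔭ⁿ, g₂₂ ∈ 1 + 𝔭ⁿ, g₂₁ ∈ 𝔭ⁿ } -/
def K2 (v : Valuation F Zm0) (n : ℕ) : Set (Matrix (Fin 2) (Fin 2) F) :=
  {g | g ∈ GL2O v ∧ v (g 0 0 - 1) ≤ ev n ∧ v (g 1 1 - 1) ≤ ev n ∧ v (g 1 0) ≤ ev n}

/-- B(F): invertible upper triangular matrices -/
def BF (F : Type*) [Field F] : Set (Matrix (Fin 2) (Fin 2) F) :=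
  {g | g 1 0 = 0 ∧ g.det ≠ 0}

lemma ev_lt_ev {m n : ℤ} : ev m < ev n ↔ n < m := by
  unfold ev
  rw [WithZero.coe_lt_coe, Multiplicative.ofAdd_lt]
  omega

lemma ev_zero_eq_one : ev 0 = 1 := rfl

/-- Let r ≥ 1 with r > v(a), a ≠ 0.  Let x, y ∈ 𝔬 with
v(x² − bxy + acy²) = 1 (i.e. det t(x,y) ∈ ϖ·𝔬^×).  Then t(x,y) ∉ B(F)·K₂(𝔭^r).
(Note `ev r < v a` says, additively, v(a) < r.) -/
theorem stmt3
    (v : Valuation F Zm0) (ϖ : F) (hϖ : v ϖ = ev 1)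
    (a b c : F)
    (hao : v a ≤ ev 0) (hbo : v b ≤ ev 0) (hc : v c = ev 0)
    (hd0 : b ^ 2 - 4 * (a * c) ≠ 0)
    (ha0 : a ≠ 0)
    (r : ℕ) (hr : 1 ≤ r) (hra : ev r < v a)
    (x y : F) (hx : v x ≤ ev 0) (hy : v y ≤ ev 0)
    (hdet : v (x ^ 2 - b * x * y + a * c * y ^ 2) = ev 1) :
    tmat a b c x y ∉ BF F * K2 v r := by
  intro hmem
  rw [Set.mem_mul] at hmem
  obtain ⟨p, hp, k, hk, heq⟩ := hmem
  obtain ⟨hp10, hpdet⟩ := hp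
  obtain ⟨⟨hkO, hkdet⟩, hk00, hk11, hk10⟩ := hk
  -- entry equations from t = p * k
  have e10 : -(a * y) = p 1 1 * k 1 0 := by
    have h := congrFun (congrFun heq 1) 0
    simp [tmat, Matrix.mul_apply, Fin.sum_univ_two, hp10] at h
    linear_combination -h
  have e11 : x - b * y = p 1 1 * k 1 1 := by
    have h := congrFun (congrFun heq 1) 1
    simp [tmat, Matrix.mul_apply, Fin.sum_univ_two, hp10] at h
    linear_combination -h
  -- v (k 1 1) = 1
  have hevr0 : ev r < ev 0 := ev_lt_ev.mpr (by exact_mod_cast hr)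
  have hk11v : v (k 1 1) = 1 := by
    have hlt1 : v (k 1 1 - 1) < 1 := lt_of_le_of_lt hk11 (ev_zero_eq_one ▸ hevr0)
    have hne : v (k 1 1 - 1) ≠ v (1 : F) := by rw [v.map_one]; exact hlt1.ne
    have h := v.map_add_of_distinct_val hne
    rwa [sub_add_cancel, v.map_one, max_eq_right hlt1.le] at h
  -- x - b*y ≠ 0
  have hdetne : x ^ 2 - b * x * y + a * c * y ^ 2 ≠ 0 := by
    intro h
    rw [h, v.map_zero] at hdet
    simp [ev] at hdet
  have hk11ne : k 1 1 ≠ 0 := by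
    intro h0; rw [h0, v.map_zero] at hk11v; exact zero_ne_one hk11v
  have hxby : x - b * y ≠ 0 := by
    intro h
    have hp11 : p 1 1 = 0 := by
      rcases mul_eq_zero.mp (h ▸ e11).symm with h1 | h1
      · exact h1
      · exact absurd h1 hk11ne
    apply hpdet
    rw [Matrix.det_fin_two, hp10, hp11]
    ring
  have hP : v (x - b * y) ≠ 0 := v.ne_zero_iff.mpr hxby
  -- valuation relations
  have h2 : v (x - b * y) = v (p 1 1) := by
    rw [e11, v.map_mul, hk11v, mul_one]
  have h1 : v a * v y = v (p 1 1) * v (k 1 0) := by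
    have := congrArg v e10
    rwa [v.map_neg, v.map_mul, v.map_mul] at this
  have hyP : v y < v (x - b * y) := by
    have hlt : v a * v y < v (x - b * y) * v a := by
      calc v a * v y = v (p 1 1) * v (k 1 0) := h1
        _ ≤ v (p 1 1) * ev r := mul_le_mul_right hk10 _
        _ = v (x - b * y) * ev r := by rw [h2]
        _ < v (x - b * y) * v a := mul_lt_mul_of_le_of_lt_of_nonneg_of_pos le_rfl hra zero_le' (zero_lt_iff.mpr hP)
    rw [mul_comm (v (x - b * y)) (v a)] at hlt
    exact lt_of_mul_lt_mul_left hlt zero_le'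
  have hby : v (b * y) < v (x - b * y) := by
    refine lt_of_le_of_lt ?_ hyP
    rw [v.map_mul]
    calc v b * v y ≤ ev 0 * v y := mul_le_mul_left hbo _
      _ = v y := by rw [ev_zero_eq_one, one_mul]
  have hxv : v x = v (x - b * y) := by
    have h := v.map_add_of_distinct_val (x := x - b * y) (y := b * y) hby.ne'
    rw [sub_add_cancel, max_eq_left hby.le] at h
    exact h
  -- compare the two terms of the determinant
  have hterm2 : v (a * c * y ^ 2) < v (x * (x - b * y)) := by
    rw [v.map_mul, v.map_mul, v.map_mul, v.map_pow, hxv, hc]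
    calc v a * 1 * v y ^ 2 ≤ 1 * 1 * v y ^ 2 := by
          gcongr
          rw [← ev_zero_eq_one]; exact hao
      _ = v y * v y := by rw [one_mul, one_mul, sq]
      _ < v (x - b * y) * v (x - b * y) := mul_lt_mul_of_le_of_lt_of_nonneg_of_pos hyP.le hyP zero_le' (zero_lt_iff.mpr hP)
  have hsum : v (x ^ 2 - b * x * y + a * c * y ^ 2)
      = v (x - b * y) * v (x - b * y) := by
    have hexp : x ^ 2 - b * x * y + a * c * y ^ 2
        = x * (x - b * y) + a * c * y ^ 2 := by ring
    rw [hexp, v.map_add_of_distinct_val hterm2.ne', max_eq_left hterm2.le,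
      v.map_mul, hxv]
  -- parity contradiction
  rw [hdet] at hsum
  set u : Multiplicative ℤ := WithZero.unzero hP with hu
  have hcoe : v (x - b * y) = (u : Zm0) := (WithZero.coe_unzero hP).symm
  rw [hcoe, ← WithZero.coe_mul] at hsum
  unfold ev at hsum
  rw [WithZero.coe_inj] at hsum
  have := congrArg Multiplicative.toAdd hsum
  simp [toAdd_mul] at this
  omega
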